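/- For reserves R_α, R_β > 0, invariant k = R_α·R_β, fee parameter φ ∈ (0,1], and external price m_p > 0 satisfying φ·m_p ≥ k/R_α² (equivalently φ·m_p·R_α² ≥ k), the function g(Δα) = m_p·Δα − (1/φ)(k/(R_α − Δα) − R_β) on [0, R_α) attains its maximum at Δα* = R_α − √(k/(φ·m_p)), and the corresponding USDT input is Δβ* = (1/φ)(√(φ·m_p·k) − R_β). -/

import Mathlib

/-- The arbitrageur's objective g(Δα) = m_p·Δα − (1/φ)(k/(R_α − Δα) − R_β)
on [0, R_α) attains its maximum at Δα* = R_α − √(k/(φ m_p)), and the corresponding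
USDT input is Δβ* = (1/φ)(√(φ m_p k) − R_β). -/
theorem arbitrage_optimal_solution (Rα Rβ k φ m_p : ℝ)
    (hRα : 0 < Rα) (hRβ : 0 < Rβ) (hk : k = Rα * Rβ)
    (hφ0 : 0 < φ) (hφ1 : φ ≤ 1) (hmp : 0 < m_p)
    (hcond : φ * m_p * Rα ^ 2 ≥ k) :
    IsMaxOn (fun Δα => m_p * Δα - (1 / φ) * (k / (Rα - Δα) - Rβ))
      (Set.Ico 0 Rα) (Rα - Real.sqrt (k / (φ * m_p))) ∧
    (1 / φ) * (k / (Rα - (Rα - Real.sqrt (k / (φ * m_p)))) - Rβ)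
      = (1 / φ) * (Real.sqrt (φ * m_p * k) - Rβ) := by
  have hk0 : 0 < k := hk ▸ mul_pos hRα hRβ
  set s := Real.sqrt (k / (φ * m_p)) with hs
  have hs0 : 0 < s := Real.sqrt_pos.mpr (div_pos hk0 (mul_pos hφ0 hmp))
  have hs2 : s ^ 2 = k / (φ * m_p) := Real.sq_sqrt (div_pos hk0 (mul_pos hφ0 hmp)).le
  have hks : k = φ * m_p * s ^ 2 := by
    field_simp at hs2; linarith
  constructor
  · intro x hx
    simp only [Set.mem_Ico] at hx
    have ht : 0 < Rα - x := by linarith [hx.2]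
    simp only [Set.mem_setOf_eq]
    have h1 : Rα - (Rα - s) = s := by ring
    rw [h1]
    have key : m_p * (Rα - s) - 1 / φ * (k / s - Rβ) - (m_p * x - 1 / φ * (k / (Rα - x) - Rβ))
        = (φ * m_p * ((Rα - x) - s) ^ 2) / (φ * (Rα - x)) := by
      rw [hks]; field_simp; ring
    nlinarith [div_nonneg (by positivity : (0:ℝ) ≤ φ * m_p * ((Rα - x) - s) ^ 2)
      (by positivity : (0:ℝ) ≤ φ * (Rα - x))]
  · have hsq : Real.sqrt (φ * m_p * k) = φ * m_p * s := by
      rw [show φ * m_p * k = (φ * m_p * s) ^ 2 by nlinarith]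
      exact Real.sqrt_sq (by positivity)
    rw [hsq, show Rα - (Rα - s) = s by ring]
    congr 1
    rw [hks]
    field_simp
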